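/- Let s ≥ 7 and let Z be a set of s points of P^1 x P^1 in multiplicity 1 generic position, with I = I(Z). Then I^2 ≠ I^(2). -/

import Mathlib

open MvPolynomial

noncomputable section

/-- The weights giving the bigrading on `k[x0,x1,y0,y1]` with
`deg x0 = deg x1 = (1,0)` and `deg y0 = deg y1 = (0,1)`. -/
def w4 : Fin 4 → ℕ × ℕ := ![(1,0), (1,0), (0,1), (0,1)]

variable (k : Type*) [Field k]

/-- `p = ((a0,a1),(b0,b1))` represents a point `[a0:a1] × [b0:b1]` of `P^1 × P^1`
if neither pair of coordinates is identically zero. -/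
def IsPtRep (p : (k × k) × (k × k)) : Prop := p.1 ≠ 0 ∧ p.2 ≠ 0

/-- Two (nonzero) vectors of `k²` define the same point of `P^1`. -/
def ProjEq (u v : k × k) : Prop := u.1 * v.2 = u.2 * v.1

/-- Two representatives define the same point of `P^1 × P^1`. -/
def PtEq (p q : (k × k) × (k × k)) : Prop := ProjEq k p.1 q.1 ∧ ProjEq k p.2 q.2

/-- The bihomogeneous ideal of the point `[a0:a1] × [b0:b1]`, namely
`(a1*x0 - a0*x1, b1*y0 - b0*y1)`. -/
def pointIdeal (p : (k × k) × (k × k)) : Ideal (MvPolynomial (Fin 4) k) :=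
  Ideal.span {C p.1.2 * X 0 - C p.1.1 * X 1, C p.2.2 * X 2 - C p.2.1 * X 3}

/-- The ideal `I(Z) = ∩ I(P_i)` of a finite tuple of points. -/
def idealOfPoints {s : ℕ} (Z : Fin s → (k × k) × (k × k)) :
    Ideal (MvPolynomial (Fin 4) k) :=
  ⨅ i, pointIdeal k (Z i)

/-- The `m`-th symbolic power `I(Z)^(m) = ∩ I(P_i)^m`. -/
def symbolicPower {s : ℕ} (Z : Fin s → (k × k) × (k × k)) (m : ℕ) :
    Ideal (MvPolynomial (Fin 4) k) :=
  ⨅ i, (pointIdeal k (Z i)) ^ m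

/-- The bigraded piece `J_(i,j)` of a bihomogeneous ideal, as a `k`-subspace. -/
def bipiece (J : Ideal (MvPolynomial (Fin 4) k)) (d : ℕ × ℕ) :
    Submodule k (MvPolynomial (Fin 4) k) :=
  (Submodule.restrictScalars k J) ⊓ (weightedHomogeneousSubmodule k w4 d)

/-- `α(J)`: the least total degree `t = i + j` in which `J` has a nonzero
bihomogeneous element of bidegree `(i,j)`. -/
def alpha (J : Ideal (MvPolynomial (Fin 4) k)) : ℕ :=
  sInf {t | ∃ F ∈ J, F ≠ 0 ∧ ∃ d : ℕ × ℕ, d.1 + d.2 = t ∧ F.IsWeightedHomogeneous w4 d}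

/-- The coordinates of a tuple of points of `P^1 × P^1`, as a point of affine `4s`-space. -/
def coordsOf {s : ℕ} (Z : Fin s → (k × k) × (k × k)) : Fin s × Fin 4 → k :=
  fun p => ![(Z p.1).1.1, (Z p.1).1.2, (Z p.1).2.1, (Z p.1).2.2] p.2

/-- The weights making `k[(P^1 × P^1)^s]` multigraded. -/
def wProd (s : ℕ) : Fin s × Fin 4 → (Fin s → ℕ × ℕ) := fun p => Pi.single p.1 (w4 p.2)

/-- `GeneralPosition k s P` says that property `P` holds for `s` general points of
`P^1 × P^1`: there is a nonempty Zariski-open subset `U` of `(P^1 × P^1)^s` (the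
complement of the zero locus of a multihomogeneous form `G` not vanishing identically)
such that `P` holds for every tuple of pairwise distinct points lying in `U`. -/
def GeneralPosition (s : ℕ) (P : (Fin s → (k × k) × (k × k)) → Prop) : Prop :=
  ∃ (G : MvPolynomial (Fin s × Fin 4) k) (d : Fin s → ℕ × ℕ),
    G.IsWeightedHomogeneous (wProd s) d ∧
    (∃ Z : Fin s → (k × k) × (k × k), (∀ i, IsPtRep k (Z i)) ∧ eval (coordsOf k Z) G ≠ 0) ∧
    ∀ Z : Fin s → (k × k) × (k × k), (∀ i, IsPtRep k (Z i)) →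
      (∀ i j, i ≠ j → ¬ PtEq k (Z i) (Z j)) →
      eval (coordsOf k Z) G ≠ 0 → P Z

/-- Distinct points in multiplicity 1 generic position: every subset `S` imposes
independent conditions in every bidegree, i.e.
`dim_k I(S)_(i,j) = max {0, (i+1)(j+1) - |S|}`. -/
def Mult1Generic {s : ℕ} (Z : Fin s → (k × k) × (k × k)) : Prop :=
  (∀ i, IsPtRep k (Z i)) ∧ (∀ i j, i ≠ j → ¬ PtEq k (Z i) (Z j)) ∧
  ∀ (S : Finset (Fin s)) (i j : ℕ),
    Module.finrank k ↥(bipiece k (⨅ a ∈ S, pointIdeal k (Z a)) (i, j))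
      = (i + 1) * (j + 1) - S.card


open Pointwise

local notation "R4" => MvPolynomial (Fin 4) k
local notation "A4" => weightedHomogeneousSubmodule k w4

instance : GradedAlgebra (weightedHomogeneousSubmodule k w4) := weightedGradedAlgebra k w4

variable {k}

lemma weight_w4 (m : Fin 4 →₀ ℕ) :
    (Finsupp.weight w4) m = (m 0 + m 1, m 2 + m 3) := by
  rw [Finsupp.weight_apply, Finsupp.sum_fintype _ _ (fun i => zero_smul ℕ (w4 i)),
    Fin.sum_univ_four]
  simp [w4, Prod.ext_iff]

lemma mem_bipiece {J : Ideal R4} {d : ℕ × ℕ} {x : R4} :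
    x ∈ bipiece k J d ↔ x ∈ J ∧ x ∈ A4 d := Iff.rfl


lemma X_mem_A4 (i : Fin 4) : (X i : R4) ∈ A4 (w4 i) :=
  isWeightedHomogeneous_X k w4 i

lemma CX_sub_mem {a b : k} {i j : Fin 4} (hij : w4 j = w4 i) :
    (C a * X i - C b * X j : R4) ∈ A4 (w4 i) := by
  rw [C_mul', C_mul']
  exact sub_mem (Submodule.smul_mem _ _ (X_mem_A4 i))
    (Submodule.smul_mem _ _ (hij ▸ X_mem_A4 j))

lemma pointIdeal_homog (p : (k × k) × (k × k)) :
    (pointIdeal k p).IsHomogeneous A4 := by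
  apply Ideal.homogeneous_span
  rintro x hx
  rcases hx with rfl | rfl
  · exact ⟨(1,0), CX_sub_mem rfl⟩
  · exact ⟨(0,1), CX_sub_mem rfl⟩

lemma aeval_mem_A4 {f : Fin 4 → R4} (hf : ∀ i, f i ∈ A4 (w4 i)) {d : ℕ × ℕ} {q : R4}
    (hq : q ∈ A4 d) : aeval f q ∈ A4 d := by
  have hrw : aeval f q = ∑ m ∈ q.support, aeval f (monomial m (coeff m q)) := by
    rw [← map_sum]; exact congrArg _ q.as_sum
  rw [hrw]
  apply Submodule.sum_mem
  intro m hm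
  rw [aeval_monomial, Finsupp.prod]
  have h1 : (∏ i ∈ m.support, f i ^ m i) ∈ A4 (∑ i ∈ m.support, m i • w4 i) :=
    SetLike.prod_pow_mem_graded _ _ _ _ fun i _ => hf i
  have h2 : (∑ i ∈ m.support, m i • w4 i) = d := by
    have := hq (mem_support_iff.mp hm)
    rwa [Finsupp.weight_apply] at this
  rw [h2] at h1
  have : (algebraMap k R4) (coeff m q) * (∏ i ∈ m.support, f i ^ m i)
      = coeff m q • (∏ i ∈ m.support, f i ^ m i) := by
    rw [algebraMap_eq, C_mul']
  rw [this]
  exact Submodule.smul_mem _ _ h1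

variable (k) in
/-- The "standard" point ideal `(x0, y0)`. -/
def Qxy : Ideal (MvPolynomial (Fin 4) k) := Ideal.span {X 0, X 2}

lemma X0_mem_Qxy : (X 0 : R4) ∈ Qxy k := Ideal.subset_span (by simp)
lemma X2_mem_Qxy : (X 2 : R4) ∈ Qxy k := Ideal.subset_span (by simp)

lemma monomial_eq_X_pow_mul {m : Fin 4 →₀ ℕ} {c : k} {i : Fin 4} {t : ℕ} (h : t ≤ m i) :
    monomial m c = X i ^ t * monomial (m - Finsupp.single i t) c := by
  rw [X_pow_eq_monomial, monomial_mul, one_mul]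
  have hadd : Finsupp.single i t + (m - Finsupp.single i t) = m := by
    ext j
    by_cases hj : j = i
    · subst hj
      simp only [Finsupp.coe_add, Pi.add_apply, Finsupp.single_eq_same, Finsupp.tsub_apply]
      omega
    · simp [Finsupp.single_eq_of_ne' (Ne.symm hj), Finsupp.tsub_apply]
  rw [hadd]

/-- exceptional exponents in bidegree (3, n): `x1^3 y1^n`, `x0 x1^2 y1^n`, `x1^3 y0 y1^(n-1)` -/
def Eexp (n : ℕ) : Fin 3 → (Fin 4 →₀ ℕ) :=
  ![Finsupp.equivFunOnFinite.symm ![0, 3, 0, n],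
    Finsupp.equivFunOnFinite.symm ![1, 2, 0, n],
    Finsupp.equivFunOnFinite.symm ![0, 3, 1, n - 1]]

lemma mem_Q2_of_coeffs {n : ℕ} (hn : 1 ≤ n) {x : R4} (hx : x ∈ A4 ((3 : ℕ), n))
    (hc : ∀ t : Fin 3, coeff (Eexp n t) x = 0) :
    x ∈ (Qxy k) ^ 2 := by
  rw [x.as_sum]
  refine Ideal.sum_mem _ fun m hm => ?_
  have hw := hx (mem_support_iff.mp hm)
  rw [weight_w4, Prod.mk.injEq] at hw
  obtain ⟨hw1, hw2⟩ := hw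
  by_cases c0 : 2 ≤ m 0
  · rw [monomial_eq_X_pow_mul (k := k) c0]
    exact Ideal.mul_mem_right _ _ (Ideal.pow_mem_pow X0_mem_Qxy 2)
  · by_cases c2 : 2 ≤ m 2
    · rw [monomial_eq_X_pow_mul (k := k) c2]
      exact Ideal.mul_mem_right _ _ (Ideal.pow_mem_pow X2_mem_Qxy 2)
    · by_cases cb : 1 ≤ m 0 ∧ 1 ≤ m 2
      · rw [monomial_eq_X_pow_mul (k := k) cb.1, pow_one]
        have h2 : (1 : ℕ) ≤ (m - Finsupp.single (0 : Fin 4) 1 : Fin 4 →₀ ℕ) (2 : Fin 4) := by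
          rw [Finsupp.tsub_apply]
          simpa [Finsupp.single_apply] using cb.2
        rw [monomial_eq_X_pow_mul (k := k) h2, pow_one, ← mul_assoc, sq]
        exact Ideal.mul_mem_right _ _ (Ideal.mul_mem_mul X0_mem_Qxy X2_mem_Qxy)
      · -- m is one of the three exceptional exponents: contradiction with hc
        exfalso
        have hne := mem_support_iff.mp hm
        have hcase : (m 0 = 0 ∧ m 2 = 0) ∨ (m 0 = 1 ∧ m 2 = 0) ∨ (m 0 = 0 ∧ m 2 = 1) := by
          omega
        have key : ∃ t : Fin 3, m = Eexp n t := by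
          rcases hcase with ⟨h1, h2⟩ | ⟨h1, h2⟩ | ⟨h1, h2⟩
          · exact ⟨0, by ext j; fin_cases j <;>
              simp [Eexp, Finsupp.equivFunOnFinite_symm_apply_apply] <;> omega⟩
          · exact ⟨1, by ext j; fin_cases j <;>
              simp [Eexp, Finsupp.equivFunOnFinite_symm_apply_apply] <;> omega⟩
          · exact ⟨2, by ext j; fin_cases j <;>
              simp [Eexp, Finsupp.equivFunOnFinite_symm_apply_apply] <;> omega⟩
        obtain ⟨t, rfl⟩ := key
        exact hne (hc t)

open Module in
lemma finrank_A4_le_bipiece_Q2 (n : ℕ) (hn : 1 ≤ n)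
    [FiniteDimensional k (A4 ((3 : ℕ), n))] :
    finrank k (A4 ((3 : ℕ), n)) ≤ finrank k (bipiece k ((Qxy k) ^ 2) (3, n)) + 3 := by
  classical
  set D : Submodule k R4 := A4 ((3 : ℕ), n) with hD
  let ψ : R4 →ₗ[k] (Fin 3 → k) := LinearMap.pi (fun t => lcoeff k (Eexp n t))
  let φ : D →ₗ[k] (Fin 3 → k) := ψ.comp D.subtype
  have hrn : finrank k (LinearMap.range φ) + finrank k (LinearMap.ker φ) = finrank k D :=
    LinearMap.finrank_range_add_finrank_ker φ
  have hr3 : finrank k (LinearMap.range φ) ≤ 3 := by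
    have := Submodule.finrank_le (LinearMap.range φ)
    rwa [Module.finrank_pi k, Fintype.card_fin] at this
  have hker : finrank k (LinearMap.ker φ) ≤ finrank k (bipiece k ((Qxy k) ^ 2) (3, n)) := by
    have hmap : Submodule.map D.subtype (LinearMap.ker φ) ≤ bipiece k ((Qxy k) ^ 2) (3, n) := by
      rintro _ ⟨y, hy, rfl⟩
      refine ⟨mem_Q2_of_coeffs hn y.2 fun t => ?_, y.2⟩
      have := congrFun (LinearMap.mem_ker.mp hy) t
      simpa [φ, ψ, lcoeff] using this
    have heq : finrank k (LinearMap.ker φ) =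
        finrank k (Submodule.map D.subtype (LinearMap.ker φ)) :=
      (Submodule.equivMapOfInjective D.subtype (Submodule.injective_subtype D) _).finrank_eq
    rw [heq]
    haveI : FiniteDimensional k (bipiece k ((Qxy k) ^ 2) (3, n)) :=
      Submodule.finiteDimensional_of_le (inf_le_right : _ ≤ A4 ((3:ℕ), n))
    exact Submodule.finrank_mono hmap
  omega

lemma exists_uv {a : k × k} (ha : a ≠ 0) : ∃ u v : k, a.2 * u - a.1 * v = 1 := by
  by_cases h2 : a.2 ≠ 0
  · exact ⟨a.2⁻¹, 0, by field_simp; simp⟩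
  · push_neg at h2
    have h1 : a.1 ≠ 0 := by
      intro h1; exact ha (Prod.ext h1 h2)
    exact ⟨0, -a.1⁻¹, by field_simp [h2]; simp⟩

lemma CX_add_mem {a b : k} {i j : Fin 4} (hij : w4 j = w4 i) :
    (C a * X i + C b * X j : R4) ∈ A4 (w4 i) := by
  rw [C_mul', C_mul']
  exact add_mem (Submodule.smul_mem _ _ (X_mem_A4 i))
    (Submodule.smul_mem _ _ (hij ▸ X_mem_A4 j))

open Module in
lemma finrank_A4_le_bipiece_pointIdeal_sq {p : (k × k) × (k × k)} (hp : IsPtRep k p)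
    (n : ℕ) (hn : 1 ≤ n) [FiniteDimensional k (A4 ((3 : ℕ), n))] :
    finrank k (A4 ((3 : ℕ), n)) ≤ finrank k (bipiece k ((pointIdeal k p) ^ 2) (3, n)) + 3 := by
  classical
  obtain ⟨u, v, huv⟩ := exists_uv hp.1
  obtain ⟨w, z, hwz⟩ := exists_uv hp.2
  set a0 := p.1.1; set a1 := p.1.2; set b0 := p.2.1; set b1 := p.2.2
  -- substitution maps
  set f : Fin 4 → R4 := ![C u * X 0 + C a0 * X 1, C v * X 0 + C a1 * X 1,
    C w * X 2 + C b0 * X 3, C z * X 2 + C b1 * X 3] with hf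
  set g : Fin 4 → R4 := ![C a1 * X 0 - C a0 * X 1, C (-v) * X 0 + C u * X 1,
    C b1 * X 2 - C b0 * X 3, C (-z) * X 2 + C w * X 3] with hg
  have hCuv : (C a1 * C u - C a0 * C v : R4) = 1 := by
    rw [← C_mul, ← C_mul, ← C_sub, huv, C_1]
  have hCwz : (C b1 * C w - C b0 * C z : R4) = 1 := by
    rw [← C_mul, ← C_mul, ← C_sub, hwz, C_1]
  have hf0 : f 0 = C u * X 0 + C a0 * X 1 := rfl
  have hf1 : f 1 = C v * X 0 + C a1 * X 1 := rfl
  have hf2 : f 2 = C w * X 2 + C b0 * X 3 := rfl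
  have hf3 : f 3 = C z * X 2 + C b1 * X 3 := rfl
  have hg0 : g 0 = C a1 * X 0 - C a0 * X 1 := rfl
  have hg1 : g 1 = C (-v) * X 0 + C u * X 1 := rfl
  have hg2 : g 2 = C b1 * X 2 - C b0 * X 3 := rfl
  have hg3 : g 3 = C (-z) * X 2 + C w * X 3 := rfl
  have hfg : (aeval f).comp (aeval g) = AlgHom.id k R4 := by
    apply MvPolynomial.algHom_ext
    intro i
    rw [AlgHom.comp_apply, aeval_X, AlgHom.id_apply]
    fin_cases i
    · show aeval f (g 0) = X 0
      rw [hg0]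
      simp only [map_sub, map_add, map_mul, aeval_C, aeval_X, algebraMap_eq, hf0, hf1]
      linear_combination (X 0 : R4) * hCuv
    · show aeval f (g 1) = X 1
      rw [hg1]
      simp only [map_sub, map_add, map_mul, aeval_C, aeval_X, algebraMap_eq, hf0, hf1, map_neg]
      linear_combination (X 1 : R4) * hCuv
    · show aeval f (g 2) = X 2
      rw [hg2]
      simp only [map_sub, map_add, map_mul, aeval_C, aeval_X, algebraMap_eq, hf2, hf3]
      linear_combination (X 2 : R4) * hCwz
    · show aeval f (g 3) = X 3
      rw [hg3]
      simp only [map_sub, map_add, map_mul, aeval_C, aeval_X, algebraMap_eq, hf2, hf3, map_neg]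
      linear_combination (X 3 : R4) * hCwz
  have hgf : (aeval g).comp (aeval f) = AlgHom.id k R4 := by
    apply MvPolynomial.algHom_ext
    intro i
    rw [AlgHom.comp_apply, aeval_X, AlgHom.id_apply]
    fin_cases i
    · show aeval g (f 0) = X 0
      rw [hf0]
      simp only [map_sub, map_add, map_mul, aeval_C, aeval_X, algebraMap_eq, hg0, hg1, map_neg]
      linear_combination (X 0 : R4) * hCuv
    · show aeval g (f 1) = X 1
      rw [hf1]
      simp only [map_sub, map_add, map_mul, aeval_C, aeval_X, algebraMap_eq, hg0, hg1, map_neg]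
      linear_combination (X 1 : R4) * hCuv
    · show aeval g (f 2) = X 2
      rw [hf2]
      simp only [map_sub, map_add, map_mul, aeval_C, aeval_X, algebraMap_eq, hg2, hg3, map_neg]
      linear_combination (X 2 : R4) * hCwz
    · show aeval g (f 3) = X 3
      rw [hf3]
      simp only [map_sub, map_add, map_mul, aeval_C, aeval_X, algebraMap_eq, hg2, hg3, map_neg]
      linear_combination (X 3 : R4) * hCwz
  -- the linear equivalence given by `aeval g`
  set e : R4 ≃ₗ[k] R4 := LinearEquiv.ofLinear (aeval g).toLinearMap (aeval f).toLinearMap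
    (by rw [← AlgHom.comp_toLinearMap, hgf]; rfl)
    (by rw [← AlgHom.comp_toLinearMap, hfg]; rfl) with he
  have hgA : ∀ i, g i ∈ A4 (w4 i) := by
    intro i
    fin_cases i
    · exact hg0 ▸ (CX_sub_mem (a := a1) (b := a0) rfl)
    · show g 1 ∈ A4 (w4 1)
      rw [hg1]
      exact CX_add_mem (a := -v) (b := u) (i := 0) (j := 1) rfl
    · exact hg2 ▸ (CX_sub_mem (a := b1) (b := b0) rfl)
    · show g 3 ∈ A4 (w4 3)
      rw [hg3]
      exact CX_add_mem (a := -z) (b := w) (i := 2) (j := 3) rfl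
  -- `aeval g` maps Qxy^2 into pointIdeal^2
  have hQmap : ∀ x ∈ (Qxy k) ^ 2, aeval g x ∈ (pointIdeal k p) ^ 2 := by
    intro x hx
    have h1 : Ideal.map (aeval g) ((Qxy k) ^ 2) = (Ideal.map (aeval g) (Qxy k)) ^ 2 :=
      Ideal.map_pow _ _ _
    have h2 : Ideal.map (aeval g) (Qxy k) = pointIdeal k p := by
      rw [Qxy, Ideal.map_span]
      congr 1
      rw [Set.image_insert_eq, Set.image_singleton, aeval_X, aeval_X, hg0, hg2]
    have := Ideal.mem_map_of_mem (aeval g) hx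
    rwa [h1, h2] at this
  -- transport of the bigraded pieces
  have hmap : Submodule.map e.toLinearMap (bipiece k ((Qxy k) ^ 2) (3, n))
      ≤ bipiece k ((pointIdeal k p) ^ 2) (3, n) := by
    rintro _ ⟨x, ⟨hxQ, hxA⟩, rfl⟩
    have hex : e.toLinearMap x = aeval g x := rfl
    rw [hex]
    exact ⟨hQmap x hxQ, aeval_mem_A4 hgA hxA⟩
  haveI : FiniteDimensional k (bipiece k ((pointIdeal k p) ^ 2) (3, n)) :=
    Submodule.finiteDimensional_of_le (inf_le_right : _ ≤ A4 ((3:ℕ), n))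
  haveI : FiniteDimensional k (bipiece k ((Qxy k) ^ 2) (3, n)) :=
    Submodule.finiteDimensional_of_le (inf_le_right : _ ≤ A4 ((3:ℕ), n))
  have h5 : finrank k (bipiece k ((Qxy k) ^ 2) (3, n))
      ≤ finrank k (bipiece k ((pointIdeal k p) ^ 2) (3, n)) := by
    rw [← LinearEquiv.finrank_map_eq e (bipiece k ((Qxy k) ^ 2) (3, n))]
    exact Submodule.finrank_mono hmap
  have h6 := finrank_A4_le_bipiece_Q2 (k := k) n hn
  omega

open Module in
lemma finrank_inf_iInf {ι : Type*} (d : ℕ × ℕ) [FiniteDimensional k (A4 d)]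
    (B : ι → Submodule k R4) (N : ℕ) (hN : finrank k (A4 d) = N)
    (hB : ∀ i, N ≤ finrank k ↥(A4 d ⊓ B i) + 3) (T : Finset ι) :
    N ≤ finrank k ↥(A4 d ⊓ ⨅ i ∈ T, B i) + 3 * T.card := by
  classical
  induction T using Finset.induction_on with
  | empty =>
    have h1 : (⨅ i ∈ (∅ : Finset ι), B i) = ⊤ := by simp
    rw [h1, inf_top_eq, hN]
    omega
  | @insert a T ha ih =>
    rw [Finset.iInf_insert]
    have hsplit : A4 d ⊓ (B a ⊓ ⨅ i ∈ T, B i)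
        = (A4 d ⊓ B a) ⊓ (A4 d ⊓ ⨅ i ∈ T, B i) := by
      rw [inf_inf_distrib_left]
    rw [hsplit]
    set q : Submodule k R4 := A4 d ⊓ B a with hq
    set p : Submodule k R4 := A4 d ⊓ ⨅ i ∈ T, B i with hp
    haveI : FiniteDimensional k q := Submodule.finiteDimensional_of_le inf_le_left
    haveI : FiniteDimensional k p := Submodule.finiteDimensional_of_le inf_le_left
    have hsum := Submodule.finrank_sup_add_finrank_inf_eq q p
    have hsup : finrank k ↥(q ⊔ p) ≤ N := by
      rw [← hN]
      exact Submodule.finrank_mono (sup_le inf_le_left inf_le_left)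
    rw [Finset.card_insert_of_notMem ha]
    have hBa := hB a
    rw [← hq] at hBa
    omega

open Module in
lemma finrank_submodule_mul_le (p q : Submodule k R4)
    [FiniteDimensional k p] [FiniteDimensional k q] :
    finrank k ↥(p * q : Submodule k R4) ≤ finrank k p * finrank k q := by
  classical
  let bp := Module.finBasis k p
  let bq := Module.finBasis k q
  have hp : p = Submodule.span k (Set.range fun i => (bp i : R4)) := by
    conv_lhs => rw [← Submodule.map_subtype_top p, ← bp.span_eq, Submodule.map_span]
    congr 1
    rw [← Set.range_comp]
    rfl
  have hq : q = Submodule.span k (Set.range fun i => (bq i : R4)) := by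
    conv_lhs => rw [← Submodule.map_subtype_top q, ← bq.span_eq, Submodule.map_span]
    congr 1
    rw [← Set.range_comp]
    rfl
  set T : Finset R4 := Finset.image
    (fun x : Fin (finrank k p) × Fin (finrank k q) => (bp x.1 : R4) * (bq x.2 : R4))
    Finset.univ with hT
  have hset : ((Set.range fun i => (bp i : R4)) * (Set.range fun i => (bq i : R4)) : Set R4)
      = (T : Set R4) := by
    ext z
    constructor
    · rintro ⟨x, ⟨i, rfl⟩, y, ⟨j, rfl⟩, rfl⟩
      exact Finset.mem_coe.mpr (Finset.mem_image.mpr ⟨(i, j), Finset.mem_univ _, rfl⟩)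
    · intro hz
      obtain ⟨⟨i, j⟩, -, rfl⟩ := Finset.mem_image.mp (Finset.mem_coe.mp hz)
      exact ⟨_, ⟨i, rfl⟩, _, ⟨j, rfl⟩, rfl⟩
  have hmul : (p * q : Submodule k R4) = Submodule.span k (T : Set R4) := by
    conv_lhs => rw [hp, hq]
    rw [Submodule.span_mul_span, hset]
  rw [hmul]
  calc finrank k ↥(Submodule.span k (T : Set R4)) ≤ T.card := by
        simpa [Set.finrank] using finrank_span_finset_le_card T
    _ ≤ (Finset.univ : Finset (Fin (finrank k p) × Fin (finrank k q))).card :=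
        Finset.card_image_le
    _ = finrank k p * finrank k q := by simp

/-- The bigraded piece of `I^2` lies in the sum of products of bigraded pieces of `I`. -/
lemma bipiece_sq_le {I : Ideal R4} (hI : I.IsHomogeneous (weightedHomogeneousSubmodule k w4))
    (d : ℕ × ℕ) :
    bipiece k (I ^ 2) d ≤
      ⨆ (ef : (ℕ × ℕ) × (ℕ × ℕ)) (_ : ef.1 + ef.2 = d),
        (bipiece k I ef.1 * bipiece k I ef.2 : Submodule k R4) := by
  classical
  set W := ⨆ (ef : (ℕ × ℕ) × (ℕ × ℕ)) (_ : ef.1 + ef.2 = d),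
        (bipiece k I ef.1 * bipiece k I ef.2 : Submodule k R4) with hW
  have key : ∀ x ∈ I ^ 2, GradedRing.proj (weightedHomogeneousSubmodule k w4) d x ∈ W := by
    intro x hx
    rw [sq] at hx
    refine Submodule.mul_induction_on hx ?_ ?_
    · intro m hm n hn
      have hrw : m * n = ∑ e ∈ (DirectSum.decompose (weightedHomogeneousSubmodule k w4) m).support,
          ∑ f ∈ (DirectSum.decompose (weightedHomogeneousSubmodule k w4) n).support,
          ((DirectSum.decompose (weightedHomogeneousSubmodule k w4) m e : R4) *
            (DirectSum.decompose (weightedHomogeneousSubmodule k w4) n f : R4)) := by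
        conv_lhs => rw [← DirectSum.sum_support_decompose (weightedHomogeneousSubmodule k w4) m,
          ← DirectSum.sum_support_decompose (weightedHomogeneousSubmodule k w4) n]
        rw [Finset.sum_mul_sum]
      rw [hrw, map_sum]
      refine Submodule.sum_mem _ fun e he => ?_
      rw [map_sum]
      refine Submodule.sum_mem _ fun f hf => ?_
      have hmem : ((DirectSum.decompose (weightedHomogeneousSubmodule k w4) m e : R4) *
          (DirectSum.decompose (weightedHomogeneousSubmodule k w4) n f : R4))
            ∈ (weightedHomogeneousSubmodule k w4) (e + f) :=
        SetLike.mul_mem_graded (SetLike.coe_mem _) (SetLike.coe_mem _)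
      by_cases hef : e + f = d
      · rw [GradedRing.proj_apply, DirectSum.decompose_of_mem_same _ (hef ▸ hmem)]
        have hm' : (DirectSum.decompose (weightedHomogeneousSubmodule k w4) m e : R4)
            ∈ bipiece k I e := ⟨hI e hm, SetLike.coe_mem _⟩
        have hn' : (DirectSum.decompose (weightedHomogeneousSubmodule k w4) n f : R4)
            ∈ bipiece k I f := ⟨hI f hn, SetLike.coe_mem _⟩
        exact Submodule.mem_iSup_of_mem (e, f)
          (Submodule.mem_iSup_of_mem hef (Submodule.mul_mem_mul hm' hn'))
      · rw [GradedRing.proj_apply, DirectSum.decompose_of_mem_ne _ hmem hef]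
        exact zero_mem _
    · intro x y hxW hyW
      rw [map_add]
      exact add_mem hxW hyW
  intro x hx
  obtain ⟨hx2, hxA⟩ := hx
  have := key x hx2
  rwa [GradedRing.proj_apply, DirectSum.decompose_of_mem_same _ hxA] at this

/-- For `s ≥ 7` points of `P^1 × P^1` in multiplicity 1 generic
position, `I^2 ≠ I^(2)`. -/
theorem second_symbolic_ne_square {k : Type*} [Field k] [IsAlgClosed k]
    (s : ℕ) (hs : 7 ≤ s)
    (Z : Fin s → (k × k) × (k × k)) (hZ : Mult1Generic k Z) :
    idealOfPoints k Z ^ 2 ≠ symbolicPower k Z 2 := by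
  classical
  obtain ⟨hrep, hdist, hdim⟩ := hZ
  intro heq
  set c := s / 2 with hc
  set e := s / 3 with he
  set n := c + e with hn
  set d : ℕ × ℕ := (3, n) with hd
  set I := idealOfPoints k Z with hI
  -- dimensions of the graded pieces of the ambient ring
  have hRdim : ∀ i j : ℕ,
      Module.finrank k ↥(weightedHomogeneousSubmodule k w4 (i, j)) = (i+1)*(j+1) := by
    intro i j
    have h0 := hdim ∅ i j
    have hbot : (⨅ a ∈ (∅ : Finset (Fin s)), pointIdeal k (Z a)) = ⊤ := by simp
    rw [hbot] at h0
    have hbp : bipiece k (⊤ : Ideal (MvPolynomial (Fin 4) k)) (i, j) = weightedHomogeneousSubmodule k w4 (i, j) := by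
      ext x; simp [bipiece]
    rw [hbp] at h0
    simpa using h0
  have hfd : ∀ d' : ℕ × ℕ, FiniteDimensional k ↥(weightedHomogeneousSubmodule k w4 d') := by
    rintro ⟨i, j⟩
    exact FiniteDimensional.of_finrank_pos (by rw [hRdim]; positivity)
  haveI : FiniteDimensional k ↥(weightedHomogeneousSubmodule k w4 d) := hfd d
  have hfdbp : ∀ (J : Ideal (MvPolynomial (Fin 4) k)) (d' : ℕ × ℕ), FiniteDimensional k ↥(bipiece k J d') := by
    intro J d'
    haveI := hfd d'
    exact Submodule.finiteDimensional_of_le (inf_le_right : _ ≤ weightedHomogeneousSubmodule k w4 d')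
  -- dimensions of the graded pieces of I
  have hIdim : ∀ i j : ℕ,
      Module.finrank k ↥(bipiece k I (i, j)) = (i+1)*(j+1) - s := by
    intro i j
    have h0 := hdim Finset.univ i j
    have huniv : (⨅ a ∈ (Finset.univ : Finset (Fin s)), pointIdeal k (Z a)) = I := by
      rw [hI, idealOfPoints]; simp
    rw [huniv] at h0
    simpa using h0
  have hIbot : ∀ i j : ℕ, (i+1)*(j+1) ≤ s → bipiece k I (i, j) = ⊥ := by
    intro i j hij
    haveI := hfdbp I (i, j)
    rw [← Submodule.finrank_eq_zero (R := k), hIdim i j]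
    omega
  -- upper bound for the degree-d piece of I^2
  set δ1 := 2 * (c + 1) - s with hδ1
  set δ2 := 3 * (e + 1) - s with hδ2
  have hIhom : I.IsHomogeneous (weightedHomogeneousSubmodule k w4) := by
    rw [hI, idealOfPoints]
    exact Ideal.IsHomogeneous.iInf fun i => pointIdeal_homog (Z i)
  set V : Submodule k (MvPolynomial (Fin 4) k) := bipiece k I (1, c) * bipiece k I (2, e) with hV
  have hWV : (⨆ (ef : (ℕ×ℕ) × (ℕ×ℕ)) (_ : ef.1 + ef.2 = d),
      (bipiece k I ef.1 * bipiece k I ef.2 : Submodule k (MvPolynomial (Fin 4) k))) ≤ V := by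
    refine iSup_le fun ef => iSup_le fun hef => ?_
    obtain ⟨⟨e1, e2⟩, f1, f2⟩ := ef
    have h1 : e1 + f1 = 3 := congrArg Prod.fst hef
    have h2 : e2 + f2 = n := congrArg Prod.snd hef
    by_cases hez : (e1+1)*(e2+1) ≤ s
    · rw [hIbot e1 e2 hez, Submodule.bot_mul]; exact bot_le
    by_cases hfz : (f1+1)*(f2+1) ≤ s
    · rw [hIbot f1 f2 hfz, Submodule.mul_bot]; exact bot_le
    push_neg at hez hfz
    have he13 : e1 ≤ 3 := by omega
    have hf13 : f1 ≤ 3 := by omega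
    have hcase : (e1 = 1 ∧ e2 = c ∧ f1 = 2 ∧ f2 = e)
        ∨ (e1 = 2 ∧ e2 = e ∧ f1 = 1 ∧ f2 = c) := by
      interval_cases e1 <;> interval_cases f1 <;> omega
    rcases hcase with ⟨rfl, rfl, rfl, rfl⟩ | ⟨rfl, rfl, rfl, rfl⟩
    · exact le_rfl
    · exact le_of_eq (Submodule.mul_comm _ _)
  have hVle : V ≤ weightedHomogeneousSubmodule k w4 d := by
    rw [hV]
    refine Submodule.mul_le.mpr fun m hm n' hn' => ?_
    have hmm := SetLike.mul_mem_graded hm.2 hn'.2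
    have heq2 : (((1:ℕ), c) + ((2:ℕ), e) : ℕ × ℕ) = d := by
      rw [hd, hn]; rfl
    rwa [heq2] at hmm
  haveI : FiniteDimensional k ↥V := Submodule.finiteDimensional_of_le hVle
  have hup : Module.finrank k ↥(bipiece k (I^2) d) ≤ δ1 * δ2 := by
    haveI := hfdbp I (1, c); haveI := hfdbp I (2, e)
    calc Module.finrank k ↥(bipiece k (I^2) d) ≤ Module.finrank k ↥V :=
          Submodule.finrank_mono ((bipiece_sq_le hIhom d).trans hWV)
      _ ≤ Module.finrank k ↥(bipiece k I (1, c)) * Module.finrank k ↥(bipiece k I (2, e)) :=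
          finrank_submodule_mul_le _ _
      _ = δ1 * δ2 := by
          rw [hIdim 1 c, hIdim 2 e, hδ1, hδ2]
  -- lower bound for the degree-d piece of the symbolic square
  have hlow : 4 * (n + 1) ≤
      Module.finrank k ↥(bipiece k (symbolicPower k Z 2) d) + 3 * s := by
    have hbip : bipiece k (symbolicPower k Z 2) d
        = weightedHomogeneousSubmodule k w4 d ⊓ ⨅ i ∈ (Finset.univ : Finset (Fin s)),
            Submodule.restrictScalars k ((pointIdeal k (Z i))^2) := by
      ext x
      simp only [bipiece, symbolicPower, Submodule.mem_inf, Submodule.restrictScalars_mem,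
        Submodule.mem_iInf, Finset.mem_univ, iInf_true]
      tauto
    rw [hbip]
    have hN : Module.finrank k ↥(weightedHomogeneousSubmodule k w4 d) = 4 * (n + 1) := by
      rw [hd, hRdim 3 n]
    have hper : ∀ i : Fin s, 4 * (n+1) ≤ Module.finrank k
        ↥(weightedHomogeneousSubmodule k w4 d ⊓ Submodule.restrictScalars k ((pointIdeal k (Z i))^2)) + 3 := by
      intro i
      have hne : (1:ℕ) ≤ n := by omega
      haveI : FiniteDimensional k ↥(weightedHomogeneousSubmodule k w4 ((3:ℕ), n)) := hfd (3, n)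
      have hkey := finrank_A4_le_bipiece_pointIdeal_sq (hrep i) n hne
      rw [hRdim 3 n] at hkey
      have hcomm : (weightedHomogeneousSubmodule k w4 d ⊓ Submodule.restrictScalars k ((pointIdeal k (Z i))^2))
          = bipiece k ((pointIdeal k (Z i))^2) (3, n) := by
        rw [bipiece, inf_comm, hd]
      rw [hcomm]
      omega
    have hfin := finrank_inf_iInf d
      (fun i => Submodule.restrictScalars k ((pointIdeal k (Z i))^2))
      (4 * (n + 1)) hN hper Finset.univ
    simpa using hfin
  -- contradiction
  rw [heq] at hup
  have hd1 : δ1 = 1 ∨ δ1 = 2 := by omega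
  have hd2 : δ2 = 1 ∨ δ2 = 2 ∨ δ2 = 3 := by omega
  rcases hd1 with h1 | h1 <;> rcases hd2 with h2 | h2 | h2 <;>
    rw [h1, h2] at hup <;> omega
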